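/- The partial order RQ decomposition is unique: if H ∈ ℝ^{d×p} has full row rank and H = R Q = R' Q' are two decompositions where R, R' have nonnegative diagonal and are supported on the partial order (R_{ij} = 0 unless i ⪯ j), and the rows of Q, Q' are unit norm with q_i orthogonal to span{q_j : i ≺ j}, then R = R' and Q = Q'. -/

import Mathlib

open Finset in
lemma aux_diag_ne_zero {d : ℕ} {r : Fin d → Fin d → Prop} (hr : IsPartialOrder (Fin d) r)
    {R : Matrix (Fin d) (Fin d) ℝ} (hsupp : ∀ i j, ¬ r i j → R i j = 0)
    (hdet : R.det ≠ 0) (i : Fin d) : R i i ≠ 0 := by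
  classical
  set f : Fin d → ℕ := fun a => (univ.filter (fun k => r k a)).card with hf
  have hmono : ∀ a b, r a b → a ≠ b → f a < f b := by
    intro a b hab hne
    apply Finset.card_lt_card
    constructor
    · intro k hk
      simp only [mem_filter, mem_univ, true_and] at hk ⊢
      exact hr.trans _ _ _ hk hab
    · intro hsub
      have hb : b ∈ univ.filter (fun k => r k b) := by
        simp [hr.refl b]
      have := hsub hb
      simp only [mem_filter, mem_univ, true_and] at this
      exact hne (hr.antisymm _ _ hab this)
  have hBT : R.BlockTriangular f := by
    intro a b hab
    apply hsupp
    intro hrab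
    rcases eq_or_ne a b with h | h
    · subst h; exact lt_irrefl _ hab
    · exact lt_asymm hab (hmono a b hrab h)
  rw [hBT.det] at hdet
  have h1 := Finset.prod_ne_zero_iff.mp hdet (f i) (mem_image_of_mem f (mem_univ i))
  have hBT2 : (R.toSquareBlock f (f i)).BlockTriangular id := by
    intro a b hab
    simp only [Matrix.toSquareBlock_def]
    apply hsupp
    intro hrab
    rcases eq_or_ne (a : Fin d) (b : Fin d) with h | h
    · exact absurd (Subtype.ext h) (ne_of_gt hab)
    · have hlt := hmono _ _ hrab h
      rw [a.2, b.2] at hlt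
      exact lt_irrefl _ hlt
  rw [Matrix.det_of_upperTriangular hBT2] at h1
  have h2 := Finset.prod_ne_zero_iff.mp h1 ⟨i, rfl⟩ (mem_univ _)
  simpa [Matrix.toSquareBlock_def] using h2

open Finset in
/-- Uniqueness of the partial order RQ decomposition. -/
theorem stmt7 (d p : ℕ) (H : Matrix (Fin d) (Fin p) ℝ) (hH : H.rank = d)
    (r : Fin d → Fin d → Prop) (hr : IsPartialOrder (Fin d) r)
    (R R' : Matrix (Fin d) (Fin d) ℝ) (Q Q' : Matrix (Fin d) (Fin p) ℝ)
    (hRQ : H = R * Q) (hRQ' : H = R' * Q')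
    (hRdiag : ∀ i, 0 ≤ R i i) (hRdiag' : ∀ i, 0 ≤ R' i i)
    (hRsupp : ∀ i j, ¬ r i j → R i j = 0)
    (hRsupp' : ∀ i j, ¬ r i j → R' i j = 0)
    (hQnorm : ∀ i, ∑ x, Q i x ^ 2 = 1)
    (hQnorm' : ∀ i, ∑ x, Q' i x ^ 2 = 1)
    (hQorth : ∀ i j, r i j → i ≠ j → ∑ x, Q i x * Q j x = 0)
    (hQorth' : ∀ i j, r i j → i ≠ j → ∑ x, Q' i x * Q' j x = 0) :
    R = R' ∧ Q = Q' := by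
  classical
  -- rows of H are linearly independent
  have linH : LinearIndependent ℝ (fun i => H i) := by
    rw [linearIndependent_iff_card_eq_finrank_span]
    rw [Set.finrank, show (fun i => H i) = H.row from rfl, ← Matrix.rank_eq_finrank_span_row, hH, Fintype.card_fin]
  have injH : Function.Injective H.vecMul := Matrix.vecMul_injective_iff.mpr linH
  -- R and R' are invertible
  have injR : Function.Injective R.vecMul := by
    intro v w hvw
    apply injH
    show Matrix.vecMul v H = Matrix.vecMul w H
    rw [hRQ, ← Matrix.vecMul_vecMul, ← Matrix.vecMul_vecMul]
    have hvw' : Matrix.vecMul v R = Matrix.vecMul w R := hvw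
    rw [hvw']
  have injR' : Function.Injective R'.vecMul := by
    intro v w hvw
    apply injH
    show Matrix.vecMul v H = Matrix.vecMul w H
    rw [hRQ', ← Matrix.vecMul_vecMul, ← Matrix.vecMul_vecMul]
    have hvw' : Matrix.vecMul v R' = Matrix.vecMul w R' := hvw
    rw [hvw']
  have hdetR : R.det ≠ 0 := by
    have := (Matrix.isUnit_iff_isUnit_det R).mp (Matrix.vecMul_injective_iff_isUnit.mp injR)
    simpa using this
  have hdetR' : R'.det ≠ 0 := by
    have := (Matrix.isUnit_iff_isUnit_det R').mp (Matrix.vecMul_injective_iff_isUnit.mp injR')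
    simpa using this
  have hRpos : ∀ i, 0 < R i i :=
    fun i => lt_of_le_of_ne (hRdiag i) (Ne.symm (aux_diag_ne_zero hr hRsupp hdetR i))
  -- rows of Q are linearly independent
  have hQrank : Q.rank = d := by
    refine le_antisymm (by simpa using Q.rank_le_card_height) ?_
    calc d = H.rank := hH.symm
    _ ≤ Q.rank := by rw [hRQ]; exact Matrix.rank_mul_le_right R Q
  have linQ : LinearIndependent ℝ (fun i => Q i) := by
    rw [linearIndependent_iff_card_eq_finrank_span]
    rw [Set.finrank, show (fun i => Q i) = Q.row from rfl, ← Matrix.rank_eq_finrank_span_row, hQrank, Fintype.card_fin]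
  have injQ : Function.Injective Q.vecMul := Matrix.vecMul_injective_iff.mpr linQ
  -- entrywise equation
  have E : ∀ i x, ∑ k, R i k * Q k x = ∑ k, R' i k * Q' k x := by
    intro i x
    have h1 : (R * Q) i x = (R' * Q') i x := by rw [← hRQ, ← hRQ']
    simpa [Matrix.mul_apply] using h1
  -- main induction
  have main : ∀ n : ℕ, ∀ i : Fin d, (univ.filter (fun k => r i k ∧ i ≠ k)).card < n →
      (∀ j, R i j = R' i j) ∧ (∀ x, Q i x = Q' i x) := by
    intro n
    induction n with
    | zero => intro i h; exact absurd h (Nat.not_lt_zero _)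
    | succ n ih =>
      intro i hi
      have IHQ : ∀ j, r i j → i ≠ j → ∀ x, Q j x = Q' j x := by
        intro j hij hne
        refine (ih j ?_).2
        have hsub : univ.filter (fun k => r j k ∧ j ≠ k) ⊂ univ.filter (fun k => r i k ∧ i ≠ k) := by
          constructor
          · intro k hk
            simp only [mem_filter, mem_univ, true_and] at hk ⊢
            refine ⟨hr.trans _ _ _ hij hk.1, ?_⟩
            rintro rfl
            exact hne (hr.antisymm _ _ hij hk.1)
          · intro hsub
            have hj : j ∈ univ.filter (fun k => r i k ∧ i ≠ k) := by
              simp [hij, hne]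
            have := hsub hj
            simp only [mem_filter, mem_univ, true_and] at this
            exact this.2 rfl
        have := Finset.card_lt_card hsub
        omega
      set c : Fin d → ℝ := fun k => if r i k ∧ i ≠ k then R' i k - R i k else 0 with hcdef
      have hc_pos : ∀ k, r i k → i ≠ k → c k = R' i k - R i k := by
        intro k h1 h2; simp [hcdef, h1, h2]
      have hc_neg : ∀ k, ¬ (r i k ∧ i ≠ k) → c k = 0 := by
        intro k h1; simp only [hcdef]; rw [if_neg h1]
      -- W : the combination equals the diagonal difference
      have W : ∀ x, ∑ k, c k * Q k x = R i i * Q i x - R' i i * Q' i x := by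
        intro x
        have hterm : ∀ k ∈ (univ : Finset (Fin d)), c k * Q k x =
            (R' i k * Q' k x - R i k * Q k x) +
              (if k = i then R i i * Q i x - R' i i * Q' i x else 0) := by
          intro k _
          by_cases hk : r i k ∧ i ≠ k
          · have hki : k ≠ i := fun h => hk.2 h.symm
            rw [hc_pos k hk.1 hk.2, if_neg hki, ← IHQ k hk.1 hk.2 x]
            ring
          · rw [hc_neg k hk]
            rcases eq_or_ne k i with h | h
            · subst h; rw [if_pos rfl]; ring
            · have h1 : ¬ r i k := fun hrik => hk ⟨hrik, Ne.symm h⟩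
              rw [hRsupp i k h1, hRsupp' i k h1, if_neg h]; ring
        calc ∑ k, c k * Q k x
            = ∑ k, ((R' i k * Q' k x - R i k * Q k x) +
                (if k = i then R i i * Q i x - R' i i * Q' i x else 0)) :=
              Finset.sum_congr rfl hterm
          _ = (∑ k, R' i k * Q' k x - ∑ k, R i k * Q k x) +
                (R i i * Q i x - R' i i * Q' i x) := by
              rw [Finset.sum_add_distrib, Finset.sum_sub_distrib, Finset.sum_ite_eq' univ i]
              simp
          _ = R i i * Q i x - R' i i * Q' i x := by rw [← E i x]; ring
      -- orthogonality of the combination to each Q j, j above i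
      have O : ∀ j, r i j → i ≠ j → (∑ x, Q j x * (∑ k, c k * Q k x)) = 0 := by
        intro j hij hne
        have h1 : ∑ x, Q i x * Q j x = 0 := hQorth i j hij hne
        have h2 : ∑ x, Q' i x * Q j x = 0 := by
          calc ∑ x, Q' i x * Q j x = ∑ x, Q' i x * Q' j x :=
                Finset.sum_congr rfl fun x _ => by rw [IHQ j hij hne x]
          _ = 0 := hQorth' i j hij hne
        calc ∑ x, Q j x * (∑ k, c k * Q k x)
            = ∑ x, (R i i * (Q i x * Q j x) - R' i i * (Q' i x * Q j x)) :=
              Finset.sum_congr rfl fun x _ => by rw [W x]; ring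
          _ = R i i * ∑ x, Q i x * Q j x - R' i i * ∑ x, Q' i x * Q j x := by
              rw [Finset.sum_sub_distrib, Finset.mul_sum, Finset.mul_sum]
          _ = 0 := by rw [h1, h2]; ring
      -- the combination is zero
      have hw0 : ∀ x, (∑ k, c k * Q k x) = 0 := by
        have hsq : ∑ x, (∑ k, c k * Q k x) * (∑ k, c k * Q k x) = 0 := by
          calc ∑ x, (∑ k, c k * Q k x) * (∑ k, c k * Q k x)
              = ∑ x, ∑ k, c k * (Q k x * (∑ k, c k * Q k x)) := by
                refine Finset.sum_congr rfl fun x _ => ?_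
                rw [Finset.sum_mul]
                exact Finset.sum_congr rfl fun k _ => by ring
            _ = ∑ k, c k * ∑ x, Q k x * (∑ k, c k * Q k x) := by
                rw [Finset.sum_comm]
                exact Finset.sum_congr rfl fun k _ => by rw [Finset.mul_sum]
            _ = 0 := by
                refine Finset.sum_eq_zero fun k _ => ?_
                by_cases hk : r i k ∧ i ≠ k
                · rw [O k hk.1 hk.2, mul_zero]
                · rw [hc_neg k hk, zero_mul]
        intro x
        have h := (Finset.sum_eq_zero_iff_of_nonneg
          (fun x _ => mul_self_nonneg (∑ k, c k * Q k x))).mp hsq x (mem_univ x)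
        exact mul_self_eq_zero.mp h
      -- coefficients are zero
      have hc0 : c = 0 := by
        apply injQ
        funext x
        show Matrix.vecMul c Q x = Matrix.vecMul (0 : Fin d → ℝ) Q x
        have hv : Q.vecMul c x = ∑ k, c k * Q k x := by
          simp [Matrix.vecMul, dotProduct]
        have hv0 : Q.vecMul (0 : Fin d → ℝ) x = 0 := by
          simp [Matrix.vecMul, dotProduct]
        rw [hv, hv0, hw0 x]
      -- diagonal difference is zero pointwise
      have hQD : ∀ x, R i i * Q i x = R' i i * Q' i x := by
        intro x
        have := W x
        rw [hw0 x] at this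
        linarith [this]
      -- equal diagonal
      have hdiag : R i i = R' i i := by
        have h1 : R i i ^ 2 = R' i i ^ 2 := by
          calc R i i ^ 2 = R i i ^ 2 * ∑ x, Q i x ^ 2 := by rw [hQnorm i]; ring
            _ = ∑ x, (R i i * Q i x) ^ 2 := by
                rw [Finset.mul_sum]; exact Finset.sum_congr rfl fun x _ => by ring
            _ = ∑ x, (R' i i * Q' i x) ^ 2 :=
                Finset.sum_congr rfl fun x _ => by rw [hQD x]
            _ = R' i i ^ 2 * ∑ x, Q' i x ^ 2 := by
                rw [Finset.mul_sum]; exact Finset.sum_congr rfl fun x _ => by ring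
            _ = R' i i ^ 2 := by rw [hQnorm' i]; ring
        nlinarith [hRdiag i, hRdiag' i, sq_nonneg (R i i - R' i i), sq_nonneg (R i i + R' i i)]
      refine ⟨?_, ?_⟩
      · intro j
        by_cases hj : r i j ∧ i ≠ j
        · have := congrFun hc0 j
          rw [hc_pos j hj.1 hj.2] at this
          have : R' i j - R i j = 0 := this
          linarith
        · rcases eq_or_ne i j with h | h
          · subst h; exact hdiag
          · have h1 : ¬ r i j := fun hrij => hj ⟨hrij, h⟩
            rw [hRsupp i j h1, hRsupp' i j h1]
      · intro x
        have h1 := hQD x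
        rw [← hdiag] at h1
        exact mul_left_cancel₀ (ne_of_gt (hRpos i)) h1
  have key : ∀ i : Fin d, (∀ j, R i j = R' i j) ∧ (∀ x, Q i x = Q' i x) :=
    fun i => main _ i (Nat.lt_succ_self _)
  constructor
  · ext i j; exact (key i).1 j
  · ext i x; exact (key i).2 x
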